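/- Let Ω be a semigroup and (A, {≺_α, ≻_α}_{α∈Ω}) a dendriform-family algebra over a commutative ring k. Then the k-module A ⊗_k k[Ω], where k[Ω] is the free k-module on Ω, equipped with the bilinear operations determined on pure tensors by (a ⊗ α) ≺ (b ⊗ β) = (a ≺_β b) ⊗ αβ and (a ⊗ α) ≻ (b ⊗ β) = (a ≻_α b) ⊗ αβ, is a dendriform algebra; that is, (x ≺ y) ≺ z = x ≺ (y ≺ z + y ≻ z), (x ≻ y) ≺ z = x ≻ (y ≺ z), and (x ≺ y + x ≻ y) ≻ z = x ≻ (y ≻ z) for all x, y, z ∈ A ⊗_k k[Ω]. -/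

import Mathlib

/-- A dendriform-family algebra over a semigroup `Ω`: a `k`-module `A` with `k`-bilinear
operations `≺_α, ≻_α : A ⊗ A → A` (`α ∈ Ω`) satisfying the three dendriform-family
identities. -/
structure DendFamily (k : Type*) (Ω : Type*) (A : Type*)
    [CommRing k] [Semigroup Ω] [AddCommGroup A] [Module k A] where
  prec : Ω → A →ₗ[k] A →ₗ[k] A
  succ : Ω → A →ₗ[k] A →ₗ[k] A
  prec_prec : ∀ (α β : Ω) (a b c : A),
    prec β (prec α a b) c = prec (α * β) a (prec β b c + succ α b c)
  succ_prec : ∀ (α β : Ω) (a b c : A),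
    prec β (succ α a b) c = succ α a (prec β b c)
  succ_succ : ∀ (α β : Ω) (a b c : A),
    succ (α * β) (prec β a b + succ α a b) c = succ α a (succ β b c)

open TensorProduct in
/-- If `(A, {≺_α, ≻_α})` is a dendriform-family algebra, then
`A ⊗ k[Ω]` (with `k[Ω] = Ω →₀ k` the free `k`-module on `Ω`), equipped with the
bilinear operations `P`, `S` determined on pure tensors by
`(a ⊗ α) ≺ (b ⊗ β) = (a ≺_β b) ⊗ αβ` and `(a ⊗ α) ≻ (b ⊗ β) = (a ≻_α b) ⊗ αβ`,
is a dendriform algebra. -/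
theorem DendFamily.tensor_monoidAlgebra_dendriform
    (k Ω A : Type*) [CommRing k] [CharZero k] [Semigroup Ω]
    [AddCommGroup A] [Module k A] (D : DendFamily k Ω A)
    (P S : (A ⊗[k] (Ω →₀ k)) →ₗ[k] (A ⊗[k] (Ω →₀ k)) →ₗ[k] (A ⊗[k] (Ω →₀ k)))
    (hP : ∀ (a b : A) (α β : Ω),
      P (a ⊗ₜ[k] Finsupp.single α 1) (b ⊗ₜ[k] Finsupp.single β 1) =
        (D.prec β a b) ⊗ₜ[k] Finsupp.single (α * β) 1)
    (hS : ∀ (a b : A) (α β : Ω),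
      S (a ⊗ₜ[k] Finsupp.single α 1) (b ⊗ₜ[k] Finsupp.single β 1) =
        (D.succ α a b) ⊗ₜ[k] Finsupp.single (α * β) 1) :
    ∀ x y z : A ⊗[k] (Ω →₀ k),
      P (P x y) z = P x (P y z + S y z) ∧
      P (S x y) z = S x (P y z) ∧
      S (P x y + S x y) z = S x (S y z) := by
  classical
  -- custom induction principle: generators are `a ⊗ single α 1`
  have ind : ∀ (p : A ⊗[k] (Ω →₀ k) → Prop),
      p 0 →
      (∀ (a : A) (α : Ω), p (a ⊗ₜ[k] Finsupp.single α 1)) →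
      (∀ u v, p u → p v → p (u + v)) →
      (∀ (c : k) u, p u → p (c • u)) →
      ∀ x, p x := by
    intro p h0 hg hadd hsmul x
    induction x using TensorProduct.induction_on with
    | zero => exact h0
    | tmul a f =>
      induction f using Finsupp.induction_linear with
      | zero => simpa using h0
      | add f g hf hg' => rw [TensorProduct.tmul_add]; exact hadd _ _ hf hg'
      | single α c =>
        have h : a ⊗ₜ[k] Finsupp.single α c = c • (a ⊗ₜ[k] Finsupp.single α (1 : k)) := by
          rw [← TensorProduct.tmul_smul, Finsupp.smul_single', mul_one]
        rw [h]; exact hsmul _ _ (hg a α)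
    | add u v hu hv => exact hadd _ _ hu hv
  have main : ∀ x y z : A ⊗[k] (Ω →₀ k),
      P (P x y) z = P x (P y z) + P x (S y z) ∧
      P (S x y) z = S x (P y z) ∧
      S x (S y z) = S (P x y) z + S (S x y) z := by
    refine ind _ ?_ ?_ ?_ ?_
    · intro y z; refine ⟨?_, ?_, ?_⟩ <;> simp
    · intro a α
      refine ind _ ?_ ?_ ?_ ?_
      · intro z; refine ⟨?_, ?_, ?_⟩ <;> simp
      · intro b β
        refine ind _ ?_ ?_ ?_ ?_
        · refine ⟨?_, ?_, ?_⟩ <;> simp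
        · intro c γ
          refine ⟨?_, ?_, ?_⟩
          · simp only [hP, hS]
            rw [D.prec_prec β γ a b c, mul_assoc, map_add, TensorProduct.add_tmul]
          · simp only [hP, hS]
            rw [D.succ_prec α γ a b c, mul_assoc]
          · simp only [hP, hS]
            rw [← D.succ_succ α β a b c, map_add, LinearMap.add_apply,
              TensorProduct.add_tmul, ← mul_assoc]
        · intro z1 z2 h1 h2
          refine ⟨?_, ?_, ?_⟩ <;> simp [map_add, h1, h2] <;> abel
        · intro c0 z h
          refine ⟨?_, ?_, ?_⟩ <;> simp [map_smul, h, smul_add] <;> abel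
      · intro y1 y2 h1 h2 z
        refine ⟨?_, ?_, ?_⟩ <;> simp [map_add, h1 z, h2 z] <;> abel
      · intro c0 y h z
        refine ⟨?_, ?_, ?_⟩ <;> simp [map_smul, h z, smul_add] <;> abel
    · intro x1 x2 h1 h2 y z
      refine ⟨?_, ?_, ?_⟩ <;> simp [map_add, h1 y z, h2 y z] <;> abel
    · intro c0 x h y z
      refine ⟨?_, ?_, ?_⟩ <;> simp [map_smul, h y z, smul_add] <;> abel
  intro x y z
  obtain ⟨h1, h2, h3⟩ := main x y z
  refine ⟨?_, h2, ?_⟩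
  · rw [map_add]; exact h1
  · rw [map_add, LinearMap.add_apply]; exact h3.symm
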